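/- Let A be a commutative ring, I an ideal of A, and f ∈ I a regular element (non-zerodivisor). Then the subring A[I/f] of the localization A_f, generated over A by the elements a/f for a ∈ I, is isomorphic as an A-algebra to the quotient of the Rees algebra A[It] = ⨁_{n≥0} Iⁿtⁿ by the ideal generated by (1 - ft). -/

import Mathlib

open Polynomial

/-- `1 - f·t` is an element of the Rees algebra `A[It]` when `f ∈ I`. -/
lemma one_sub_ft_mem_reesAlgebra {A : Type*} [CommRing A] (I : Ideal A) {f : A} (hf : f ∈ I) :
    (1 : A[X]) - Polynomial.C f * Polynomial.X ∈ reesAlgebra I := by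
  refine sub_mem (one_mem _) ?_
  rw [Polynomial.C_mul_X_eq_monomial]
  exact reesAlgebra.monomial_mem.mpr (by simpa using hf)

/-- geometric-series factorization: if the "reversal of `p` at `f`" vanishes, then
`1 - f X` divides `p`, with an explicit quotient. -/
lemma key_factor {A : Type*} [CommRing A] (f : A) (p : A[X])
    (H : ∑ k ∈ Finset.range (p.natDegree + 1), p.coeff k * f ^ (p.natDegree - k) = 0) :
    p = (1 - C f * X) * (∑ k ∈ Finset.range (p.natDegree + 1),
      C (p.coeff k) * X ^ k * ∑ i ∈ Finset.range (p.natDegree - k), (C f * X) ^ i) := by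
  set n := p.natDegree with hn
  have h1 : ∀ m : ℕ,
      (1 - C f * X) * ∑ i ∈ Finset.range m, (C f * X) ^ i = 1 - (C f * X) ^ m := by
    intro m
    have := geom_sum_mul (C f * X) m
    linear_combination -this
  have h2 : ∀ k ∈ Finset.range (n + 1),
      (1 - C f * X) * (C (p.coeff k) * X ^ k * ∑ i ∈ Finset.range (n - k), (C f * X) ^ i)
        = C (p.coeff k) * X ^ k - C (p.coeff k * f ^ (n - k)) * X ^ n := by
    intro k hk
    have hk' : k + (n - k) = n :=
      Nat.add_sub_cancel' (Nat.lt_succ_iff.mp (Finset.mem_range.mp hk))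
    calc (1 - C f * X) * (C (p.coeff k) * X ^ k * ∑ i ∈ Finset.range (n - k), (C f * X) ^ i)
        = C (p.coeff k) * X ^ k *
            ((1 - C f * X) * ∑ i ∈ Finset.range (n - k), (C f * X) ^ i) := by ring
      _ = C (p.coeff k) * X ^ k * (1 - (C f * X) ^ (n - k)) := by rw [h1]
      _ = C (p.coeff k) * X ^ k
            - C (p.coeff k * f ^ (n - k)) * (X ^ k * X ^ (n - k)) := by
          rw [mul_pow, ← C_pow, C_mul]; ring
      _ = _ := by rw [← pow_add, hk']
  rw [Finset.mul_sum, Finset.sum_congr rfl h2, Finset.sum_sub_distrib,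
    ← Finset.sum_mul, ← map_sum C, H, map_zero, zero_mul, sub_zero,
    ← as_sum_range_C_mul_X_pow]

theorem affine_modification_eq_rees_quotient {A : Type*} [CommRing A] (I : Ideal A) (f : A)
    (hfI : f ∈ I) (hreg : f ∈ nonZeroDivisors A) :
    Nonempty
      (((reesAlgebra I) ⧸ (Ideal.span {(⟨1 - Polynomial.C f * Polynomial.X,
          one_sub_ft_mem_reesAlgebra I hfI⟩ : reesAlgebra I)})) ≃ₐ[A]
        (Algebra.adjoin A {x : Localization.Away f |
          ∃ a ∈ I, algebraMap A (Localization.Away f) f * x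
            = algebraMap A (Localization.Away f) a})) := by
  set L := Localization.Away f
  set u : L := IsLocalization.Away.invSelf f with hu_def
  have hu : algebraMap A L f * u = 1 := IsLocalization.Away.mul_invSelf f
  set S : Set L := {x : L | ∃ a ∈ I,
      algebraMap A L f * x = algebraMap A L a} with hS
  set φ : reesAlgebra I →ₐ[A] L :=
    (Polynomial.aeval u).comp (reesAlgebra I).val with hφ
  -- every monomial value lands in the adjoin
  have hmem : ∀ (k : ℕ) (b : A), b ∈ I ^ k →
      algebraMap A L b * u ^ k ∈ Algebra.adjoin A S := by
    intro k
    induction k with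
    | zero => intro b _; simpa using Subalgebra.algebraMap_mem (Algebra.adjoin A S) b
    | succ k ih =>
      intro b hb
      rw [pow_succ] at hb
      refine Submodule.mul_induction_on hb ?_ ?_
      · intro m hm x hx
        have h1 : algebraMap A L x * u ∈ Algebra.adjoin A S :=
          Algebra.subset_adjoin ⟨x, hx, by
            rw [← mul_assoc, mul_comm (algebraMap A L f), mul_assoc, hu, mul_one]⟩
        have : algebraMap A L (m * x) * u ^ (k + 1)
            = (algebraMap A L m * u ^ k) * (algebraMap A L x * u) := by
          rw [map_mul, pow_succ]; ring
        rw [this]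
        exact mul_mem (ih m hm) h1
      · intro x y hx hy
        have : algebraMap A L (x + y) * u ^ (k + 1)
            = algebraMap A L x * u ^ (k + 1) + algebraMap A L y * u ^ (k + 1) := by
          rw [map_add, add_mul]
        rw [this]; exact add_mem hx hy
  have hrange : ∀ p : reesAlgebra I, φ p ∈ Algebra.adjoin A S := by
    rintro ⟨p, hp⟩
    show Polynomial.aeval u p ∈ _
    rw [p.as_sum_range_C_mul_X_pow, map_sum]
    refine Subalgebra.sum_mem _ fun k _ => ?_
    rw [map_mul, map_pow, aeval_C, aeval_X]
    exact hmem k _ (hp k)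
  set ψ : reesAlgebra I →ₐ[A] Algebra.adjoin A S :=
    φ.codRestrict (Algebra.adjoin A S) hrange with hψ
  have hsurj : Function.Surjective ψ := by
    have hle : Algebra.adjoin A S ≤ φ.range := by
      refine Algebra.adjoin_le ?_
      rintro x ⟨a, ha, hax⟩
      refine ⟨⟨C a * X, ?_⟩, ?_⟩
      · rw [C_mul_X_eq_monomial]
        exact reesAlgebra.monomial_mem.mpr (by simpa using ha)
      · show Polynomial.aeval u (C a * X) = x
        rw [map_mul, aeval_C, aeval_X]
        have : algebraMap A L f * (algebraMap A L a * u) = algebraMap A L f * x := by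
          rw [hax, mul_left_comm, hu, mul_one]
        have hfu : IsUnit (algebraMap A L f) := IsUnit.of_mul_eq_one _ hu
        exact (hfu.mul_left_cancel this)
    rintro ⟨y, hy⟩
    obtain ⟨p, hp⟩ := hle hy
    exact ⟨p, Subtype.ext hp⟩
  have hker : RingHom.ker ψ = Ideal.span {(⟨1 - Polynomial.C f * Polynomial.X,
      one_sub_ft_mem_reesAlgebra I hfI⟩ : reesAlgebra I)} := by
    apply le_antisymm
    · rintro ⟨p, hp⟩ hpk
      have hφ0 : Polynomial.aeval u p = 0 := by
        have : (ψ ⟨p, hp⟩ : L) = 0 := by rw [hpk]; rfl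
        exact this
      set n := p.natDegree with hn
      have H0 : algebraMap A L (∑ k ∈ Finset.range (n + 1), p.coeff k * f ^ (n - k)) = 0 := by
        rw [map_sum]
        have heach : ∀ k ∈ Finset.range (n + 1),
            algebraMap A L (p.coeff k * f ^ (n - k))
              = algebraMap A L f ^ n * (algebraMap A L (p.coeff k) * u ^ k) := by
          intro k hk
          have hk' : n - k + k = n :=
            Nat.sub_add_cancel (Nat.lt_succ_iff.mp (Finset.mem_range.mp hk))
          rw [map_mul, map_pow]
          calc algebraMap A L (p.coeff k) * algebraMap A L f ^ (n - k)
              = algebraMap A L (p.coeff k)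
                  * (algebraMap A L f ^ (n - k) * (algebraMap A L f * u) ^ k) := by
                rw [hu, one_pow, mul_one]
            _ = algebraMap A L f ^ n * (algebraMap A L (p.coeff k) * u ^ k) := by
                conv_rhs => rw [← hk', pow_add]
                ring
        rw [Finset.sum_congr rfl heach, ← Finset.mul_sum]
        have : ∑ k ∈ Finset.range (n + 1), algebraMap A L (p.coeff k) * u ^ k
            = Polynomial.aeval u p := by
          conv_rhs => rw [p.as_sum_range_C_mul_X_pow]
          rw [map_sum]
          exact Finset.sum_congr rfl fun k _ => by rw [map_mul, map_pow, aeval_C, aeval_X]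
        rw [this, hφ0, mul_zero]
      have H : ∑ k ∈ Finset.range (n + 1), p.coeff k * f ^ (n - k) = 0 := by
        have hinj : Function.Injective (algebraMap A L) :=
          IsLocalization.injective L (Submonoid.powers_le.mpr hreg)
        exact hinj (by rw [H0, map_zero])
      have hq : (∑ k ∈ Finset.range (n + 1),
          C (p.coeff k) * X ^ k * ∑ i ∈ Finset.range (n - k), (C f * X) ^ i)
            ∈ reesAlgebra I := by
        refine Subalgebra.sum_mem _ fun k _ => mul_mem ?_ (Subalgebra.sum_mem _ fun i _ =>
          pow_mem ?_ i)
        · rw [C_mul_X_pow_eq_monomial]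
          exact reesAlgebra.monomial_mem.mpr (hp k)
        · rw [C_mul_X_eq_monomial]
          exact reesAlgebra.monomial_mem.mpr (by simpa using hfI)
      refine Ideal.mem_span_singleton'.mpr ⟨⟨_, hq⟩, Subtype.ext ?_⟩
      show (∑ k ∈ Finset.range (n + 1),
          C (p.coeff k) * X ^ k * ∑ i ∈ Finset.range (n - k), (C f * X) ^ i)
            * (1 - C f * X) = p
      rw [mul_comm]
      exact (key_factor f p H).symm
    · rw [Ideal.span_singleton_le_iff_mem]
      show ψ _ = 0
      apply Subtype.ext
      show Polynomial.aeval u ((1 : A[X]) - C f * X) = (0 : L)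
      rw [map_sub, map_one, map_mul, aeval_C, aeval_X, hu, sub_self]
  exact ⟨(Ideal.quotientEquivAlgOfEq A hker.symm).trans
    (Ideal.quotientKerAlgEquivOfSurjective hsurj)⟩
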